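/- Let G be a loopless multigraph and F : V(G) → finite sets of naturals with |F(v)| < d(v)/2 for all v. If G has no F-avoiding orientation and |E(G)| is minimum among all such counterexamples, then no two vertices of even degree in G are adjacent. -/

import Mathlib

attribute [local instance] Classical.propDecidable

/-- A loopless multigraph: edges indexed by `E` with endpoints in `Sym2 V`. -/
structure Multigraph (V E : Type) where
  ends : E → Sym2 V
  loopless : ∀ e, ¬ (ends e).IsDiag

namespace Multigraph

variable {V E : Type}

/-- Degree of a vertex: number of edges incident to it. -/
noncomputable def deg [Fintype E] (G : Multigraph V E) (v : V) : ℕ :=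
  (Finset.univ.filter fun e => v ∈ G.ends e).card

/-- Two vertices are adjacent if some edge joins them. -/
def Adj (G : Multigraph V E) (u v : V) : Prop :=
  u ≠ v ∧ ∃ e, G.ends e = s(u, v)

/-- An orientation assigns a tail and head to each edge, consistent with its endpoints. -/
structure Orientation (G : Multigraph V E) where
  tail : E → V
  head : E → V
  consistent : ∀ e, G.ends e = s(tail e, head e)

/-- Out-degree of a vertex in an orientation. -/
noncomputable def Orientation.outDeg [Fintype E] {G : Multigraph V E} (D : G.Orientation)
    (v : V) : ℕ :=
  (Finset.univ.filter fun e => D.tail e = v).card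

/-- An orientation is `F`-avoiding if no vertex has out-degree in its forbidden list. -/
def Orientation.Avoids [Fintype E] {G : Multigraph V E} (D : G.Orientation)
    (F : V → Finset ℕ) : Prop :=
  ∀ v, D.outDeg v ∉ F v

/-- Number of edges with both endpoints in `S`. -/
noncomputable def eIn [Fintype E] (G : Multigraph V E) (S : Finset V) : ℕ :=
  (Finset.univ.filter fun e => ∀ w ∈ G.ends e, w ∈ S).card

/-- Number of edges with exactly one endpoint in `S`. -/
noncomputable def cut [Fintype E] (G : Multigraph V E) (S : Finset V) : ℕ :=
  (Finset.univ.filter fun e => (∃ w ∈ G.ends e, w ∈ S) ∧ ¬ ∀ w ∈ G.ends e, w ∈ S).card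

/-- Reachability by directed paths in an orientation. -/
def Orientation.Reach {G : Multigraph V E} (D : G.Orientation) : V → V → Prop :=
  Relation.ReflTransGen fun a b => ∃ e, D.tail e = a ∧ D.head e = b

end Multigraph

theorem stmt0 {V E : Type} [Fintype E] (G : Multigraph V E) (F : V → Finset ℕ)
    (hF : ∀ v, 2 * (F v).card < G.deg v)
    (hno : ¬ ∃ D : G.Orientation, D.Avoids F)
    (hmin : ∀ (V' E' : Type) [Fintype E'] (G' : Multigraph V' E') (F' : V' → Finset ℕ),
      Fintype.card E' < Fintype.card E → (∀ v, 2 * (F' v).card < G'.deg v) →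
      ∃ D : G'.Orientation, D.Avoids F') :
    ∀ u v : V, Even (G.deg u) → Even (G.deg v) → ¬ G.Adj u v := by
  intro u v hu hv hadj
  obtain ⟨huv, e₀, he₀⟩ := hadj
  have hu_mem : u ∈ G.ends e₀ := by rw [he₀]; exact Sym2.mem_mk_left u v
  have hv_mem : v ∈ G.ends e₀ := by rw [he₀]; exact Sym2.mem_mk_right u v
  -- key counting fact: filters over the subtype of edges other than e₀
  have key : ∀ (r : {e : E // e ≠ e₀} → Prop),
      (Finset.univ.filter fun e : {e : E // e ≠ e₀} => r e).card
        = (Finset.univ.filter fun e : E => ∃ h : e ≠ e₀, r ⟨e, h⟩).card := by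
    intro r
    apply Finset.card_bij (fun a _ => a.1)
    · intro a ha
      simp only [Finset.mem_filter, Finset.mem_univ, true_and] at ha ⊢
      exact ⟨a.2, ha⟩
    · intro a _ b _ h
      exact Subtype.ext h
    · intro b hb
      simp only [Finset.mem_filter, Finset.mem_univ, true_and] at hb
      obtain ⟨h, hr⟩ := hb
      exact ⟨⟨b, h⟩, by simp [hr], rfl⟩
  -- the smaller graph obtained by deleting e₀
  let G' : Multigraph V {e : E // e ≠ e₀} :=
    ⟨fun e => G.ends e.1, fun e => G.loopless e.1⟩
  -- modified lists: shift F u down by one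
  let F' : V → Finset ℕ := fun w => if w = u then (F u).image (· - 1) else F w
  have hcard : Fintype.card {e : E // e ≠ e₀} < Fintype.card E :=
    Fintype.card_subtype_lt (x := e₀) (by simp)
  -- degree of incident vertices drops by exactly one
  have hdeg : ∀ w, w ∈ G.ends e₀ → G'.deg w + 1 = G.deg w := by
    intro w hw
    have h1 : G'.deg w
        = (Finset.univ.filter fun e : E => ∃ _ : e ≠ e₀, w ∈ G.ends e).card := by
      unfold Multigraph.deg
      convert key (fun e => w ∈ G.ends e.1) using 2 <;> (ext e; simp only [Finset.mem_filter, G'])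
    have h2 : (Finset.univ.filter fun e : E => ∃ _ : e ≠ e₀, w ∈ G.ends e)
        = (Finset.univ.filter fun e : E => w ∈ G.ends e).erase e₀ := by
      ext e
      simp only [Finset.mem_filter, Finset.mem_univ, true_and, Finset.mem_erase, exists_prop]
    have h3 : e₀ ∈ Finset.univ.filter fun e : E => w ∈ G.ends e := by simp [hw]
    have h4 : 0 < (Finset.univ.filter fun e : E => w ∈ G.ends e).card :=
      Finset.card_pos.mpr ⟨e₀, h3⟩
    have h5 := Finset.card_erase_of_mem h3
    show G'.deg w + 1 = (Finset.univ.filter fun e : E => w ∈ G.ends e).card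
    rw [h1, h2]
    omega
  -- degree of non-incident vertices is unchanged
  have hdegne : ∀ w, w ∉ G.ends e₀ → G'.deg w = G.deg w := by
    intro w hw
    have h1 : G'.deg w
        = (Finset.univ.filter fun e : E => ∃ _ : e ≠ e₀, w ∈ G.ends e).card := by
      unfold Multigraph.deg
      convert key (fun e => w ∈ G.ends e.1) using 2 <;> (ext e; simp only [Finset.mem_filter, G'])
    have h2 : (Finset.univ.filter fun e : E => ∃ _ : e ≠ e₀, w ∈ G.ends e)
        = Finset.univ.filter fun e : E => w ∈ G.ends e := by
      ext e
      simp only [Finset.mem_filter, Finset.mem_univ, true_and, exists_prop]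
      constructor
      · tauto
      · intro h
        refine ⟨?_, h⟩
        rintro rfl
        exact hw h
    show G'.deg w = (Finset.univ.filter fun e : E => w ∈ G.ends e).card
    rw [h1, h2]
  -- each endpoint of e₀ is u or v
  have hmem_eq : ∀ w, w ∈ G.ends e₀ → w = u ∨ w = v := by
    intro w hw
    rw [he₀] at hw
    exact Sym2.mem_iff.mp hw
  -- the modified lists satisfy the hypothesis on G'
  have hF' : ∀ w, 2 * (F' w).card < G'.deg w := by
    intro w
    by_cases hwu : w = u
    · subst hwu
      have h1 : (F' w).card ≤ (F w).card := by
        simp only [F', if_pos rfl]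
        exact Finset.card_image_le
      have h2 := hF w
      have h3 := hdeg w hu_mem
      obtain ⟨k, hk⟩ := hu
      omega
    · have hFw : F' w = F w := if_neg hwu
      by_cases hwm : w ∈ G.ends e₀
      · have hwv : w = v := by
          rcases hmem_eq w hwm with h | h
          · exact absurd h hwu
          · exact h
        subst hwv
        have h2 := hF w
        have h3 := hdeg w hwm
        obtain ⟨k, hk⟩ := hv
        rw [hFw]
        omega
      · rw [hFw, hdegne w hwm]
        exact hF w
  obtain ⟨D', hD'⟩ := hmin V {e : E // e ≠ e₀} G' F' hcard hF'
  -- tail and head maps for the extended orientation, with opaque defining equations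
  obtain ⟨t, ht₀, ht⟩ : ∃ t : E → V, t e₀ = u ∧ ∀ (e : E) (h : e ≠ e₀), t e = D'.tail ⟨e, h⟩ :=
    ⟨fun e => if h : e = e₀ then u else D'.tail ⟨e, h⟩, dif_pos rfl, fun e h => dif_neg h⟩
  obtain ⟨s, hs₀, hs⟩ : ∃ s : E → V, s e₀ = v ∧ ∀ (e : E) (h : e ≠ e₀), s e = D'.head ⟨e, h⟩ :=
    ⟨fun e => if h : e = e₀ then v else D'.head ⟨e, h⟩, dif_pos rfl, fun e h => dif_neg h⟩
  -- extend D' to an orientation of G, directing e₀ from u to v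
  let D : G.Orientation :=
    { tail := t
      head := s
      consistent := by
        intro e
        by_cases h : e = e₀
        · subst h
          rw [ht₀, hs₀]
          exact he₀
        · rw [ht e h, hs e h]
          exact D'.consistent ⟨e, h⟩ }
  -- out-degrees of vertices other than u are unchanged
  have houtne : ∀ w, w ≠ u → D.outDeg w = D'.outDeg w := by
    intro w hw
    have h1 : D'.outDeg w
        = (Finset.univ.filter fun e : E => ∃ h : e ≠ e₀, D'.tail ⟨e, h⟩ = w).card := by
      unfold Multigraph.Orientation.outDeg
      convert key (fun e => D'.tail e = w) using 2
    have h2 : (Finset.univ.filter fun e : E => ∃ h : e ≠ e₀, D'.tail ⟨e, h⟩ = w)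
        = Finset.univ.filter fun e : E => t e = w := by
      ext e
      simp only [Finset.mem_filter, Finset.mem_univ, true_and]
      by_cases h : e = e₀
      · subst h
        rw [ht₀]
        constructor
        · rintro ⟨h, -⟩; exact absurd rfl h
        · intro hq; exact absurd hq.symm hw
      · rw [ht e h]
        exact ⟨fun ⟨_, hq⟩ => hq, fun hq => ⟨h, hq⟩⟩
    show (Finset.univ.filter fun e : E => t e = w).card = D'.outDeg w
    rw [h1, h2]
  -- out-degree of u goes up by one
  have houtu : D.outDeg u = D'.outDeg u + 1 := by
    have h1 : D'.outDeg u
        = (Finset.univ.filter fun e : E => ∃ h : e ≠ e₀, D'.tail ⟨e, h⟩ = u).card := by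
      unfold Multigraph.Orientation.outDeg
      convert key (fun e => D'.tail e = u) using 2
    have h2 : (Finset.univ.filter fun e : E => ∃ h : e ≠ e₀, D'.tail ⟨e, h⟩ = u)
        = (Finset.univ.filter fun e : E => t e = u).erase e₀ := by
      ext e
      simp only [Finset.mem_filter, Finset.mem_univ, true_and, Finset.mem_erase]
      constructor
      · rintro ⟨h, hq⟩
        exact ⟨h, by rw [ht e h]; exact hq⟩
      · rintro ⟨h, hq⟩
        exact ⟨h, by rw [← ht e h]; exact hq⟩
    have h3 : e₀ ∈ Finset.univ.filter fun e : E => t e = u := by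
      simp only [Finset.mem_filter, Finset.mem_univ, true_and]
      exact ht₀
    have h4 : 0 < (Finset.univ.filter fun e : E => t e = u).card :=
      Finset.card_pos.mpr ⟨e₀, h3⟩
    have h5 := Finset.card_erase_of_mem h3
    show (Finset.univ.filter fun e : E => t e = u).card = D'.outDeg u + 1
    rw [h1, h2]
    omega
  -- D avoids F: contradiction
  apply hno
  refine ⟨D, ?_⟩
  show ∀ w, D.outDeg w ∉ F w
  intro w
  by_cases hw : w = u
  · subst hw
    rw [houtu]
    intro hmem
    have hbad : D'.outDeg w ∈ F' w := by
      simp only [F', if_pos rfl]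
      have := Finset.mem_image_of_mem (· - 1) hmem
      simpa using this
    exact hD' w hbad
  · rw [houtne w hw]
    have := hD' w
    rwa [show F' w = F w from if_neg hw] at this
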